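/- Pareto compliance of the exact R2 indicator for adding a strictly dominating point: if Y ⊆ (0,∞)² is a finite nonempty set and z ∈ (0,∞)² strictly dominates some y ∈ Y (i.e., z₁ < y₁ and z₂ < y₂) and z is not weakly dominated by any point of Y, then R2(Y ∪ {z}) < R2(Y). -/

import Mathlib

theorem r2_pareto_compliant_dominating (Y : Set (ℝ × ℝ)) (hfin : Y.Finite)
    (hne : Y.Nonempty) (hpos : ∀ y ∈ Y, 0 < y.1 ∧ 0 < y.2)
    (z : ℝ × ℝ) (hz : 0 < z.1 ∧ 0 < z.2)
    (hdominates : ∃ y ∈ Y, z.1 < y.1 ∧ z.2 < y.2)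
    (hnondom : ¬ ∃ y ∈ Y, y.1 ≤ z.1 ∧ y.2 ≤ z.2) :
    (∫ w in (0:ℝ)..1, ⨅ y : (insert z Y : Set (ℝ × ℝ)),
        max (w * (y : ℝ × ℝ).1) ((1 - w) * (y : ℝ × ℝ).2)) <
    (∫ w in (0:ℝ)..1, ⨅ y : Y, max (w * (y : ℝ × ℝ).1) ((1 - w) * (y : ℝ × ℝ).2)) := by
  set h : ℝ → ℝ × ℝ → ℝ := fun w y => max (w * y.1) ((1 - w) * y.2) with hh
  set s : Finset (ℝ × ℝ) := hfin.toFinset with hsdef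
  have hsY : (s : Set (ℝ × ℝ)) = Y := hfin.coe_toFinset
  have hs : s.Nonempty := by
    rw [← Finset.coe_nonempty, hsY]; exact hne
  set F : ℝ → ℝ := fun w => s.inf' hs (h w) with hFdef
  -- identify the infima
  have eqF : ∀ w : ℝ, (⨅ y : Y, h w y) = F w := by
    intro w
    show _ = s.inf' hs (h w)
    rw [Finset.inf'_eq_csInf_image, hsY, iInf, ← Set.image_eq_range]
  have eqG : ∀ w : ℝ, (⨅ y : (insert z Y : Set (ℝ × ℝ)), h w y) = min (h w z) (F w) := by
    intro w
    have h1 : (⨅ y : (insert z Y : Set (ℝ × ℝ)), h w y) = sInf (h w '' insert z Y) := by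
      rw [iInf, ← Set.image_eq_range]
    rw [h1, Set.image_insert_eq]
    have hbdd : BddBelow (h w '' Y) := (hfin.image _).bddBelow
    rw [csInf_insert hbdd (hne.image _)]
    have : sInf (h w '' Y) = F w := by
      show _ = s.inf' hs (h w)
      rw [Finset.inf'_eq_csInf_image, hsY]
    rw [this]
  have hcont : ∀ y : ℝ × ℝ, Continuous (fun w => h w y) := by
    intro y
    exact ((continuous_id.mul continuous_const).max
      ((continuous_const.sub continuous_id).mul continuous_const))
  have hFcont : Continuous F :=
    Continuous.finset_inf'_apply hs (fun i _ => hcont i)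
  have hGcont : Continuous (fun w => min (h w z) (F w)) := (hcont z).min hFcont
  have hle : ∀ w ∈ Set.Ioc (0:ℝ) 1, min (h w z) (F w) ≤ F w := fun w _ => min_le_right _ _
  -- the strict point
  have hzsum : 0 < z.1 + z.2 := add_pos hz.1 hz.2
  set c : ℝ := z.2 / (z.1 + z.2) with hcdef
  have hc0 : 0 < c := div_pos hz.2 hzsum
  have hc1 : c < 1 := by
    rw [hcdef, div_lt_one hzsum]; linarith [hz.1]
  have h1c : 1 - c = z.1 / (z.1 + z.2) := by
    rw [hcdef]; field_simp; ring
  have heqcz : c * z.1 = (1 - c) * z.2 := by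
    rw [hcdef, h1c]; field_simp
  have hhz : h c z = c * z.1 := by
    rw [hh]; simp only [← heqcz, max_self]
  have hlt : ∃ w ∈ Set.Icc (0:ℝ) 1, min (h w z) (F w) < F w := by
    refine ⟨c, ⟨hc0.le, hc1.le⟩, ?_⟩
    have hstrict : h c z < F c := by
      show h c z < s.inf' hs (h c)
      rw [Finset.lt_inf'_iff]
      intro y hy
      have hyY : y ∈ Y := by rwa [← hsY]
      push_neg at hnondom
      rcases lt_or_ge z.1 y.1 with h1 | h1
      · calc h c z = c * z.1 := hhz
          _ < c * y.1 := mul_lt_mul_of_pos_left h1 hc0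
          _ ≤ h c y := le_max_left _ _
      · have h2 : z.2 < y.2 := hnondom y hyY h1
        calc h c z = (1 - c) * z.2 := by rw [hhz, heqcz]
          _ < (1 - c) * y.2 := mul_lt_mul_of_pos_left h2 (by linarith)
          _ ≤ h c y := le_max_right _ _
    exact min_lt_of_left_lt hstrict
  calc (∫ w in (0:ℝ)..1, ⨅ y : (insert z Y : Set (ℝ × ℝ)), h w y)
      = ∫ w in (0:ℝ)..1, min (h w z) (F w) := by
        apply intervalIntegral.integral_congr; intro w _; exact eqG w
    _ < ∫ w in (0:ℝ)..1, F w := by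
        exact intervalIntegral.integral_lt_integral_of_continuousOn_of_le_of_exists_lt
          one_pos hGcont.continuousOn hFcont.continuousOn hle hlt
    _ = ∫ w in (0:ℝ)..1, ⨅ y : Y, h w y := by
        apply intervalIntegral.integral_congr; intro w _; exact (eqF w).symm
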